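/- Let n, p, k be integers with 0 ≤ k < p−1, p < n and n−p+k > p, and let R(n,p,k) be the corresponding intersection of two quadrics in ℝ^n. Then R(n,p,k) is homeomorphic to the product of unit spheres S^{p−1} × S^{n−p−1}. -/

import Mathlib

open Metric

/-- The intersection of two quadrics in ℝⁿ associated to the polytope `P_k`:
`u₁² + ⋯ + u_p² = p` and `u₁² + ⋯ + u_k² + u_{p+1}² + ⋯ + u_n² = n - p + k`. -/
def quadR (n p k : ℕ) : Set (EuclideanSpace ℝ (Fin n)) :=
  {u | (∑ j : Fin n, if (j : ℕ) < p then u j ^ 2 else 0) = (p : ℝ) ∧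
       (∑ j : Fin n, if (j : ℕ) < k ∨ p ≤ (j : ℕ) then u j ^ 2 else 0) = (n : ℝ) - p + k}

namespace QuadAux

open Finset

section
variable {n p k : ℕ}

lemma sum_split {M : Type*} [AddCommMonoid M] (h : p ≤ n) (g : Fin n → M) :
    ∑ j : Fin n, g j =
      (∑ i : Fin p, g ⟨i, lt_of_lt_of_le i.2 h⟩) +
      ∑ i : Fin (n - p), g ⟨p + i, by omega⟩ := by
  let e : Fin p ⊕ Fin (n - p) ≃ Fin n := finSumFinEquiv.trans (finCongr (by omega))
  rw [← e.sum_comp g, Fintype.sum_sum_type]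
  rfl

lemma mem_sphere_iff {m : ℕ} (x : EuclideanSpace ℝ (Fin m)) :
    x ∈ sphere (0 : EuclideanSpace ℝ (Fin m)) 1 ↔ ∑ i, x i ^ 2 = 1 := by
  rw [mem_sphere_iff_norm, sub_zero, EuclideanSpace.norm_eq, Real.sqrt_eq_one]
  simp [sq_abs]

lemma sum_sub_le (hk : k ≤ p) (g : Fin p → ℝ) (hg : ∀ i, 0 ≤ g i) :
    (∑ i : Fin k, g (Fin.castLE hk i)) ≤ ∑ i, g i := by
  have h1 : (∑ i : Fin k, g (Fin.castLE hk i)) = ∑ i ∈ univ.map (Fin.castLEEmb hk), g i :=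
    (Finset.sum_map univ (Fin.castLEEmb hk) g).symm
  rw [h1]
  exact Finset.sum_le_sum_of_subset_of_nonneg (Finset.subset_univ _) fun i _ _ => hg i

lemma mem_quadR_iff (hk : k ≤ p) (hp : p ≤ n) (u : EuclideanSpace ℝ (Fin n)) :
    u ∈ quadR n p k ↔
      ((∑ i : Fin p, u ⟨(i:ℕ), lt_of_lt_of_le i.2 hp⟩ ^ 2) = p ∧
       (∑ i : Fin k, u ⟨(i:ℕ), by omega⟩ ^ 2) + (∑ i : Fin (n - p), u ⟨p + (i:ℕ), by omega⟩ ^ 2)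
         = (n : ℝ) - p + k) := by
  simp only [quadR, Set.mem_setOf_eq]
  have Q1 : (∑ j : Fin n, if (j : ℕ) < p then u j ^ 2 else 0)
      = ∑ i : Fin p, u ⟨(i:ℕ), lt_of_lt_of_le i.2 hp⟩ ^ 2 := by
    rw [sum_split hp (fun j => if (j:ℕ) < p then u j ^ 2 else 0)]
    have r1 : (∑ i : Fin p, if ((⟨(i:ℕ), lt_of_lt_of_le i.2 hp⟩ : Fin n) : ℕ) < p
          then u ⟨(i:ℕ), lt_of_lt_of_le i.2 hp⟩ ^ 2 else 0)
        = ∑ i : Fin p, u ⟨(i:ℕ), lt_of_lt_of_le i.2 hp⟩ ^ 2 :=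
      Finset.sum_congr rfl fun i _ => if_pos i.2
    have r2 : (∑ i : Fin (n - p), if ((⟨p + (i:ℕ), by omega⟩ : Fin n) : ℕ) < p
          then u ⟨p + (i:ℕ), by omega⟩ ^ 2 else 0) = 0 :=
      Finset.sum_eq_zero fun i _ => if_neg (Nat.not_lt.mpr (Nat.le_add_right p i))
    rw [r1, r2, add_zero]
  have Q2 : (∑ j : Fin n, if (j : ℕ) < k ∨ p ≤ (j : ℕ) then u j ^ 2 else 0)
      = (∑ i : Fin k, u ⟨(i:ℕ), by omega⟩ ^ 2)
        + ∑ i : Fin (n - p), u ⟨p + (i:ℕ), by omega⟩ ^ 2 := by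
    rw [sum_split hp (fun j => if (j:ℕ) < k ∨ p ≤ (j:ℕ) then u j ^ 2 else 0)]
    have r3 : (∑ i : Fin p, if ((⟨(i:ℕ), lt_of_lt_of_le i.2 hp⟩ : Fin n) : ℕ) < k
            ∨ p ≤ ((⟨(i:ℕ), lt_of_lt_of_le i.2 hp⟩ : Fin n) : ℕ)
          then u ⟨(i:ℕ), lt_of_lt_of_le i.2 hp⟩ ^ 2 else 0)
        = ∑ i : Fin k, u ⟨(i:ℕ), by omega⟩ ^ 2 := by
      rw [sum_split hk (fun i : Fin p => if ((⟨(i:ℕ), lt_of_lt_of_le i.2 hp⟩ : Fin n) : ℕ) < k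
            ∨ p ≤ ((⟨(i:ℕ), lt_of_lt_of_le i.2 hp⟩ : Fin n) : ℕ)
          then u ⟨(i:ℕ), lt_of_lt_of_le i.2 hp⟩ ^ 2 else 0)]
      have r5 : (∑ i : Fin k, if ((i:ℕ) < k ∨ p ≤ (i:ℕ))
            then u ⟨(i:ℕ), by omega⟩ ^ 2 else 0)
          = ∑ i : Fin k, u ⟨(i:ℕ), by omega⟩ ^ 2 :=
        Finset.sum_congr rfl fun i _ => if_pos (Or.inl i.2)
      have r6 : (∑ i : Fin (p - k), if ((k + (i:ℕ)) < k ∨ p ≤ k + (i:ℕ))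
            then u ⟨k + (i:ℕ), by omega⟩ ^ 2 else 0) = 0 :=
        Finset.sum_eq_zero fun i _ => if_neg (fun hc =>
          hc.elim (fun h1 => absurd h1 (Nat.not_lt.mpr (Nat.le_add_right k i)))
            (fun h2 => absurd h2 (by omega)))
      rw [r5, r6, add_zero]
    have r4 : (∑ i : Fin (n - p), if ((⟨p + (i:ℕ), by omega⟩ : Fin n) : ℕ) < k
            ∨ p ≤ ((⟨p + (i:ℕ), by omega⟩ : Fin n) : ℕ)
          then u ⟨p + (i:ℕ), by omega⟩ ^ 2 else 0)
        = ∑ i : Fin (n - p), u ⟨p + (i:ℕ), by omega⟩ ^ 2 :=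
      Finset.sum_congr rfl fun i _ => if_pos (Or.inr (Nat.le_add_right p i))
    rw [r3, r4]
  rw [Q1, Q2]

end

noncomputable section
open Real

/-- Evaluation at a coordinate is continuous. -/
lemma continuous_eval (m : ℕ) (j : Fin m) :
    Continuous fun u : EuclideanSpace ℝ (Fin m) => u j :=
  (EuclideanSpace.proj (𝕜 := ℝ) j).continuous

/-- Sum of squares of the first `k` coordinates. -/
def Skf (n k : ℕ) (hkn : k ≤ n) (u : EuclideanSpace ℝ (Fin n)) : ℝ :=
  ∑ i : Fin k, u (Fin.castLE hkn i) ^ 2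

lemma continuous_Skf (n k : ℕ) (hkn : k ≤ n) : Continuous (Skf n k hkn) :=
  continuous_finset_sum _ fun i _ => (continuous_eval n _).pow 2

lemma Skf_nonneg (n k : ℕ) (hkn : k ≤ n) (u : EuclideanSpace ℝ (Fin n)) :
    0 ≤ Skf n k hkn u :=
  Finset.sum_nonneg fun i _ => sq_nonneg _

/-- If the sum of squares of all coordinates is `c`, the partial sum is at most `c`. -/
lemma Skf_le (n k : ℕ) (hkn : k ≤ n) (u : EuclideanSpace ℝ (Fin n)) :
    Skf n k hkn u ≤ ∑ i, u i ^ 2 :=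
  sum_sub_le hkn (fun i => u i ^ 2) fun i => sq_nonneg _

/-- First factor of the forward map. -/
def Fv (n p : ℕ) (hp : p ≤ n) (u : EuclideanSpace ℝ (Fin n)) : EuclideanSpace ℝ (Fin p) :=
  (WithLp.equiv 2 (Fin p → ℝ)).symm fun i => u (Fin.castLE hp i) / Real.sqrt p

lemma Fv_apply (n p : ℕ) (hp : p ≤ n) (u : EuclideanSpace ℝ (Fin n)) (i : Fin p) :
    Fv n p hp u i = u (Fin.castLE hp i) / Real.sqrt p := rfl

/-- Second factor of the forward map. -/
def Fw (n p k : ℕ) (hkn : k ≤ n) (hp : p ≤ n) (u : EuclideanSpace ℝ (Fin n)) :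
    EuclideanSpace ℝ (Fin (n - p)) :=
  (WithLp.equiv 2 (Fin (n - p) → ℝ)).symm fun i =>
    u ⟨p + (i : ℕ), by omega⟩ / Real.sqrt ((n : ℝ) - p + k - Skf n k hkn u)

lemma Fw_apply (n p k : ℕ) (hkn : k ≤ n) (hp : p ≤ n) (u : EuclideanSpace ℝ (Fin n))
    (i : Fin (n - p)) :
    Fw n p k hkn hp u i
      = u ⟨p + (i : ℕ), by omega⟩ / Real.sqrt ((n : ℝ) - p + k - Skf n k hkn u) := rfl

/-- The inverse map. -/
def Gu (n p k : ℕ) (hk : k ≤ p) (hp : p ≤ n) (v : EuclideanSpace ℝ (Fin p))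
    (w : EuclideanSpace ℝ (Fin (n - p))) : EuclideanSpace ℝ (Fin n) :=
  (WithLp.equiv 2 (Fin n → ℝ)).symm fun j =>
    if hj : (j : ℕ) < p then Real.sqrt p * v ⟨j, hj⟩
    else Real.sqrt ((n : ℝ) - p + k - p * Skf p k hk v) * w ⟨(j : ℕ) - p, by omega⟩

lemma Gu_apply (n p k : ℕ) (hk : k ≤ p) (hp : p ≤ n) (v : EuclideanSpace ℝ (Fin p))
    (w : EuclideanSpace ℝ (Fin (n - p))) (j : Fin n) :
    Gu n p k hk hp v w j =
      if hj : (j : ℕ) < p then Real.sqrt p * v ⟨j, hj⟩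
      else Real.sqrt ((n : ℝ) - p + k - p * Skf p k hk v) * w ⟨(j : ℕ) - p, by omega⟩ := rfl

end

section Main

variable {n p k : ℕ}

lemma hh_real (h : 2 * p < n + k) : (p : ℝ) < (n : ℝ) - p + k := by
  have h2 : p + p < n + k := by omega
  have h3 : ((p : ℝ) + p) < (n : ℝ) + k := by exact_mod_cast h2
  linarith

lemma Skf_le_p (hk : k ≤ p) (hkn : k ≤ n) (hp : p ≤ n)
    (u : EuclideanSpace ℝ (Fin n)) (h1 : (∑ i : Fin p, u (Fin.castLE hp i) ^ 2) = p) :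
    Skf n k hkn u ≤ p := by
  have h4 : Skf n k hkn u ≤ ∑ i : Fin p, u (Fin.castLE hp i) ^ 2 :=
    sum_sub_le hk (fun i : Fin p => u (Fin.castLE hp i) ^ 2) fun i => sq_nonneg _
  linarith

lemma denom_pos (hk : k ≤ p) (hkn : k ≤ n) (hp : p ≤ n) (h : 2 * p < n + k)
    (u : EuclideanSpace ℝ (Fin n)) (hu : u ∈ quadR n p k) :
    0 < (n : ℝ) - p + k - Skf n k hkn u := by
  have h1 := ((mem_quadR_iff hk hp u).mp hu).1
  have h1' : (∑ i : Fin p, u (Fin.castLE hp i) ^ 2) = p := h1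
  have := Skf_le_p hk hkn hp u h1'
  have := hh_real h
  linarith

lemma cG_pos (hk : k ≤ p) (h : 2 * p < n + k) (hp0 : (0:ℝ) < p)
    (v : EuclideanSpace ℝ (Fin p)) (hv : (∑ i, v i ^ 2) = 1) :
    0 < (n : ℝ) - p + k - p * Skf p k hk v := by
  have h1 : Skf p k hk v ≤ 1 := by
    have := Skf_le p k hk v
    linarith
  have h2 : (0:ℝ) ≤ Skf p k hk v := Skf_nonneg p k hk v
  have := hh_real h
  nlinarith

lemma Fv_mem (hk : k ≤ p) (hp : p ≤ n) (hp0 : (0:ℝ) < p)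
    (u : EuclideanSpace ℝ (Fin n)) (hu : u ∈ quadR n p k) :
    Fv n p hp u ∈ sphere (0 : EuclideanSpace ℝ (Fin p)) 1 := by
  rw [mem_sphere_iff]
  have h1 : (∑ i : Fin p, u (Fin.castLE hp i) ^ 2) = p := ((mem_quadR_iff hk hp u).mp hu).1
  have e1 : ∀ i : Fin p, Fv n p hp u i ^ 2 = u (Fin.castLE hp i) ^ 2 / p := by
    intro i
    rw [Fv_apply, div_pow, Real.sq_sqrt hp0.le]
  rw [Finset.sum_congr rfl fun i _ => e1 i, ← Finset.sum_div, h1, div_self hp0.ne']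

lemma Fw_mem (hk : k ≤ p) (hkn : k ≤ n) (hp : p ≤ n) (h : 2 * p < n + k)
    (u : EuclideanSpace ℝ (Fin n)) (hu : u ∈ quadR n p k) :
    Fw n p k hkn hp u ∈ sphere (0 : EuclideanSpace ℝ (Fin (n - p))) 1 := by
  rw [mem_sphere_iff]
  have hd := denom_pos hk hkn hp h u hu
  have h2 : Skf n k hkn u + (∑ i : Fin (n - p), u ⟨p + (i:ℕ), by omega⟩ ^ 2)
      = (n : ℝ) - p + k := ((mem_quadR_iff hk hp u).mp hu).2
  have e1 : ∀ i : Fin (n - p), Fw n p k hkn hp u i ^ 2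
      = u ⟨p + (i:ℕ), by omega⟩ ^ 2 / ((n : ℝ) - p + k - Skf n k hkn u) := by
    intro i
    rw [Fw_apply, div_pow, Real.sq_sqrt hd.le]
  rw [Finset.sum_congr rfl fun i _ => e1 i, ← Finset.sum_div]
  rw [show (∑ i : Fin (n - p), u ⟨p + (i:ℕ), by omega⟩ ^ 2)
      = (n : ℝ) - p + k - Skf n k hkn u by linarith]
  exact div_self hd.ne'

lemma Gu_fst (hk : k ≤ p) (hp : p ≤ n) (v : EuclideanSpace ℝ (Fin p))
    (w : EuclideanSpace ℝ (Fin (n - p))) (i : Fin p) :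
    Gu n p k hk hp v w (Fin.castLE hp i) = Real.sqrt p * v i := by
  rw [Gu_apply, dif_pos (show ((Fin.castLE hp i : Fin n) : ℕ) < p from i.2)]
  rfl

lemma Gu_snd (hk : k ≤ p) (hp : p ≤ n) (v : EuclideanSpace ℝ (Fin p))
    (w : EuclideanSpace ℝ (Fin (n - p))) (i : Fin (n - p)) :
    Gu n p k hk hp v w ⟨p + (i : ℕ), by omega⟩
      = Real.sqrt ((n : ℝ) - p + k - p * Skf p k hk v) * w i := by
  rw [Gu_apply, dif_neg (show ¬ ((⟨p + (i:ℕ), by omega⟩ : Fin n) : ℕ) < p from by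
    simp only [Nat.not_lt]; exact Nat.le_add_right p i)]
  congr 1
  exact congrArg w (Fin.val_injective (show p + (i:ℕ) - p = (i:ℕ) by omega))

lemma Skf_Gu (hk : k ≤ p) (hkn : k ≤ n) (hp : p ≤ n) (hp0 : (0:ℝ) < p)
    (v : EuclideanSpace ℝ (Fin p)) (w : EuclideanSpace ℝ (Fin (n - p))) :
    Skf n k hkn (Gu n p k hk hp v w) = p * Skf p k hk v := by
  unfold Skf
  have e1 : ∀ i : Fin k, Gu n p k hk hp v w (Fin.castLE hkn i)
      = Real.sqrt p * v (Fin.castLE hk i) :=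
    fun i => Gu_fst hk hp v w (Fin.castLE hk i)
  rw [Finset.sum_congr rfl fun i _ => congrArg (· ^ 2) (e1 i)]
  simp only [mul_pow, Real.sq_sqrt hp0.le, ← Finset.mul_sum]

lemma Gu_mem (hk : k ≤ p) (hkn : k ≤ n) (hp : p ≤ n) (h : 2 * p < n + k) (hp0 : (0:ℝ) < p)
    (v : EuclideanSpace ℝ (Fin p)) (hv : v ∈ sphere (0 : EuclideanSpace ℝ (Fin p)) 1)
    (w : EuclideanSpace ℝ (Fin (n - p)))
    (hw : w ∈ sphere (0 : EuclideanSpace ℝ (Fin (n - p))) 1) :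
    Gu n p k hk hp v w ∈ quadR n p k := by
  rw [mem_sphere_iff] at hv hw
  have hc := cG_pos hk h hp0 v hv
  rw [mem_quadR_iff hk hp]
  constructor
  · have e1 : ∀ i : Fin p, Gu n p k hk hp v w ⟨(i:ℕ), lt_of_lt_of_le i.2 hp⟩ ^ 2
        = (p : ℝ) * v i ^ 2 := by
      intro i
      have := Gu_fst hk hp v w i
      rw [show (⟨(i:ℕ), lt_of_lt_of_le i.2 hp⟩ : Fin n) = Fin.castLE hp i from rfl, this,
        mul_pow, Real.sq_sqrt hp0.le]
    rw [Finset.sum_congr rfl fun i _ => e1 i, ← Finset.mul_sum, hv, mul_one]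
  · have e2 : ∀ i : Fin k, Gu n p k hk hp v w ⟨(i:ℕ), by omega⟩ ^ 2
        = (p : ℝ) * v (Fin.castLE hk i) ^ 2 := by
      intro i
      have := Gu_fst hk hp v w (Fin.castLE hk i)
      rw [show (⟨(i:ℕ), by omega⟩ : Fin n) = Fin.castLE hp (Fin.castLE hk i) from rfl, this,
        mul_pow, Real.sq_sqrt hp0.le]
    have e3 : ∀ i : Fin (n - p), Gu n p k hk hp v w ⟨p + (i:ℕ), by omega⟩ ^ 2
        = ((n : ℝ) - p + k - p * Skf p k hk v) * w i ^ 2 := by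
      intro i
      rw [Gu_snd hk hp v w i, mul_pow, Real.sq_sqrt hc.le]
    rw [Finset.sum_congr rfl fun i _ => e2 i, Finset.sum_congr rfl fun i _ => e3 i,
      ← Finset.mul_sum, ← Finset.mul_sum, hw, mul_one]
    rw [show (∑ i : Fin k, v (Fin.castLE hk i) ^ 2) = Skf p k hk v from rfl]
    ring

lemma Skf_Fv (hk : k ≤ p) (hkn : k ≤ n) (hp : p ≤ n) (hp0 : (0:ℝ) < p)
    (u : EuclideanSpace ℝ (Fin n)) :
    (p : ℝ) * Skf p k hk (Fv n p hp u) = Skf n k hkn u := by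
  have e : Skf p k hk (Fv n p hp u) = (∑ i : Fin k, u (Fin.castLE hkn i) ^ 2) / p := by
    rw [show Skf p k hk (Fv n p hp u)
        = ∑ i : Fin k, (u (Fin.castLE hkn i) / Real.sqrt p) ^ 2 from rfl]
    rw [Finset.sum_congr rfl fun i _ => by rw [div_pow, Real.sq_sqrt hp0.le],
      ← Finset.sum_div]
  rw [e, show Skf n k hkn u = ∑ i : Fin k, u (Fin.castLE hkn i) ^ 2 from rfl]
  field_simp

lemma GF (hk : k ≤ p) (hkn : k ≤ n) (hp : p ≤ n) (h : 2 * p < n + k) (hp0 : (0:ℝ) < p)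
    (u : EuclideanSpace ℝ (Fin n)) (hu : u ∈ quadR n p k) :
    Gu n p k hk hp (Fv n p hp u) (Fw n p k hkn hp u) = u := by
  have hsp : Real.sqrt p ≠ 0 := ne_of_gt (Real.sqrt_pos.mpr hp0)
  have hd := denom_pos hk hkn hp h u hu
  have hsd : Real.sqrt ((n : ℝ) - p + k - Skf n k hkn u) ≠ 0 :=
    ne_of_gt (Real.sqrt_pos.mpr hd)
  ext j
  by_cases hj : (j : ℕ) < p
  · rw [Gu_apply, dif_pos hj,
      show Fv n p hp u ⟨(j:ℕ), hj⟩ = u j / Real.sqrt p from rfl,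
      mul_comm, div_mul_cancel₀ _ hsp]
  · rw [Gu_apply, dif_neg hj, Skf_Fv hk hkn hp hp0 u,
      show Fw n p k hkn hp u ⟨(j:ℕ) - p, by omega⟩
        = u ⟨p + ((j:ℕ) - p), by omega⟩
          / Real.sqrt ((n : ℝ) - p + k - Skf n k hkn u) from rfl,
      show (⟨p + ((j:ℕ) - p), by omega⟩ : Fin n) = j from
        Fin.val_injective (show p + ((j:ℕ) - p) = (j:ℕ) by omega),
      mul_comm, div_mul_cancel₀ _ hsd]

lemma FGv (hk : k ≤ p) (hp : p ≤ n) (hp0 : (0:ℝ) < p)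
    (v : EuclideanSpace ℝ (Fin p)) (w : EuclideanSpace ℝ (Fin (n - p))) :
    Fv n p hp (Gu n p k hk hp v w) = v := by
  have hsp : Real.sqrt p ≠ 0 := ne_of_gt (Real.sqrt_pos.mpr hp0)
  ext i
  rw [show Fv n p hp (Gu n p k hk hp v w) i
      = Gu n p k hk hp v w (Fin.castLE hp i) / Real.sqrt p from rfl,
    Gu_fst hk hp v w i, mul_div_cancel_left₀ _ hsp]

lemma FGw (hk : k ≤ p) (hkn : k ≤ n) (hp : p ≤ n) (h : 2 * p < n + k) (hp0 : (0:ℝ) < p)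
    (v : EuclideanSpace ℝ (Fin p)) (hv : (∑ i, v i ^ 2) = 1)
    (w : EuclideanSpace ℝ (Fin (n - p))) :
    Fw n p k hkn hp (Gu n p k hk hp v w) = w := by
  have hc := cG_pos hk h hp0 v hv
  have hsc : Real.sqrt ((n : ℝ) - p + k - p * Skf p k hk v) ≠ 0 :=
    ne_of_gt (Real.sqrt_pos.mpr hc)
  ext i
  rw [show Fw n p k hkn hp (Gu n p k hk hp v w) i
      = Gu n p k hk hp v w ⟨p + (i:ℕ), by omega⟩
        / Real.sqrt ((n : ℝ) - p + k - Skf n k hkn (Gu n p k hk hp v w)) from rfl,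
    Skf_Gu hk hkn hp hp0 v w, Gu_snd hk hp v w i, mul_div_cancel_left₀ _ hsc]

lemma continuous_Fv (hp : p ≤ n) : Continuous (Fv n p hp) :=
  (PiLp.continuous_toLp 2 fun _ : Fin p => ℝ).comp
    (continuous_pi fun _ => (continuous_eval n _).div_const _)

lemma continuous_Fw_sub (hk : k ≤ p) (hkn : k ≤ n) (hp : p ≤ n) (h : 2 * p < n + k) :
    Continuous fun u : quadR n p k => Fw n p k hkn hp u.1 := by
  apply (PiLp.continuous_toLp 2 fun _ : Fin (n - p) => ℝ).comp
  apply continuous_pi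
  intro i
  apply Continuous.div
  · exact (continuous_eval n _).comp continuous_subtype_val
  · exact Real.continuous_sqrt.comp
      ((continuous_const.sub (continuous_Skf n k hkn)).comp continuous_subtype_val)
  · exact fun x => ne_of_gt (Real.sqrt_pos.mpr (denom_pos hk hkn hp h x.1 x.2))

lemma continuous_Gu_sub (hk : k ≤ p) (hp : p ≤ n) :
    Continuous fun x : sphere (0 : EuclideanSpace ℝ (Fin p)) 1 ×
        sphere (0 : EuclideanSpace ℝ (Fin (n - p))) 1 =>
      Gu n p k hk hp x.1.1 x.2.1 := by
  apply (PiLp.continuous_toLp 2 fun _ : Fin n => ℝ).comp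
  apply continuous_pi
  intro j
  by_cases hj : (j : ℕ) < p
  · simp only [dif_pos hj]
    exact continuous_const.mul ((continuous_eval p _).comp (continuous_subtype_val.comp continuous_fst))
  · simp only [dif_neg hj]
    apply Continuous.mul
    · exact Real.continuous_sqrt.comp (continuous_const.sub
        (continuous_const.mul ((continuous_Skf p k hk).comp
          (continuous_subtype_val.comp continuous_fst))))
    · exact (continuous_eval (n - p) _).comp (continuous_subtype_val.comp continuous_snd)

end Main




end QuadAux

/-- `R(n,p,k)` is homeomorphic to `S^{p-1} × S^{n-p-1}`. -/
theorem stmt0 (n p k : ℕ) (hkp : k + 1 < p) (hpn : p < n) (h : 2 * p < n + k) :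
    Nonempty (quadR n p k ≃ₜ
      sphere (0 : EuclideanSpace ℝ (Fin p)) 1 ×
      sphere (0 : EuclideanSpace ℝ (Fin (n - p))) 1) := by
  have hk : k ≤ p := by omega
  have hkn : k ≤ n := by omega
  have hp : p ≤ n := hpn.le
  have hp0 : (0:ℝ) < p := by exact_mod_cast (show 0 < p by omega)
  refine ⟨{
    toFun := fun u => (⟨QuadAux.Fv n p hp u.1, QuadAux.Fv_mem hk hp hp0 u.1 u.2⟩,
                       ⟨QuadAux.Fw n p k hkn hp u.1, QuadAux.Fw_mem hk hkn hp h u.1 u.2⟩),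
    invFun := fun x => ⟨QuadAux.Gu n p k hk hp x.1.1 x.2.1,
      QuadAux.Gu_mem hk hkn hp h hp0 x.1.1 x.1.2 x.2.1 x.2.2⟩,
    left_inv := fun u => Subtype.ext (QuadAux.GF hk hkn hp h hp0 u.1 u.2),
    right_inv := fun x => Prod.ext (Subtype.ext (QuadAux.FGv hk hp hp0 x.1.1 x.2.1))
      (Subtype.ext (QuadAux.FGw hk hkn hp h hp0 x.1.1
        ((QuadAux.mem_sphere_iff x.1.1).mp x.1.2) x.2.1)),
    continuous_toFun := ?_,
    continuous_invFun := ?_ }⟩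
  · exact ((((QuadAux.continuous_Fv hp).comp continuous_subtype_val).subtype_mk _)).prodMk
      ((QuadAux.continuous_Fw_sub hk hkn hp h).subtype_mk _)
  · exact (QuadAux.continuous_Gu_sub hk hp).subtype_mk _
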